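/- Let G be a TSO game of group II (both players may update exactly before their own moves), let c_0 be a configuration winning for player X via a positional winning strategy σ_X, and let σ̄_X be the flushing modification of σ_X (flush all buffers and then execute the instruction, whenever the move is by a non-read instruction; unchanged on read moves). Let G' be the finite game whose configurations are those configurations of G whose total buffer content has at most max{1, |B(c_0)|} messages (where |B(c_0)| is the total number of buffered messages of c_0), with the restricted transition relation and restricted final set. Then the restriction σ̄'_X of σ̄_X to the X-configurations of G' is a valid strategy of G' and is a winning strategy for player X from c_0 in G'. -/
import Mathlib

namespace TSOGames

/-- The data of a (safety) game: a partition of the configurations into those of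
player A (`isA`) and those of player B, a transition relation, and final configurations. -/
structure SGame (C : Type*) where
  isA : C → Prop
  step : C → C → Prop
  final : C → Prop

namespace SGame

variable {C : Type*} (G : SGame C)

/-- The transition relation alternates between the two players' configurations. -/
def Alternating : Prop := ∀ c c', G.step c c' → (G.isA c ↔ ¬ G.isA c')

/-- Every configuration has at least one successor. -/
def DeadlockFree : Prop := ∀ c, ∃ c', G.step c c'

/-- Final configurations belong to player A. -/
def FinalInA : Prop := ∀ c, G.final c → G.isA c

/-- An (infinite) play: consecutive configurations are related by `step`. -/
def IsPlay (ρ : ℕ → C) : Prop := ∀ i, G.step (ρ i) (ρ (i + 1))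

/-- A (history-dependent) strategy `σ`, given the strict history and the current
configuration, chooses a successor; it is valid for the player owning the
configurations satisfying `own` if it always chooses an actual successor. -/
def ValidStrat (own : C → Prop) (σ : List C → C → C) : Prop :=
  ∀ h c, own c → G.step c (σ h c)

/-- A play is consistent with the strategy `σ` of the player owning the
configurations satisfying `own` if at every such configuration the play follows `σ`. -/
def Consistent (own : C → Prop) (σ : List C → C → C) (ρ : ℕ → C) : Prop :=
  ∀ i, own (ρ i) → ρ (i + 1) = σ (List.ofFn fun j : Fin i => ρ j) (ρ i)

/-- A play is winning for player B if it visits a final configuration. -/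
def BWins (ρ : ℕ → C) : Prop := ∃ i, G.final (ρ i)

/-- A play is winning for player A if it never visits a final configuration. -/
def AWinsPlay (ρ : ℕ → C) : Prop := ¬ G.BWins ρ

/-- `σ` is a winning strategy from `c0` for the player owning the configurations
satisfying `own`, whose plays are winning when they satisfy `winPlay`:
it is valid and every play from `c0` consistent with it is winning. -/
def WinningStrat (own : C → Prop) (winPlay : (ℕ → C) → Prop)
    (σ : List C → C → C) (c0 : C) : Prop :=
  G.ValidStrat own σ ∧
    ∀ ρ : ℕ → C, ρ 0 = c0 → G.IsPlay ρ → Consistent own σ ρ → winPlay ρ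

/-- The given player has a winning strategy from `c0`. -/
def Wins (own : C → Prop) (winPlay : (ℕ → C) → Prop) (c0 : C) : Prop :=
  ∃ σ, G.WinningStrat own winPlay σ c0

/-- `c0` is winning for player A. -/
def WinA (c0 : C) : Prop := G.Wins (fun c => G.isA c) G.AWinsPlay c0

/-- `c0` is winning for player B. -/
def WinB (c0 : C) : Prop := G.Wins (fun c => ¬ G.isA c) G.BWins c0

end SGame

/-- Restriction of a game to a subset `D` of its configurations. -/
def restrictGame {C : Type*} (G : SGame C) (D : Set C) : SGame C where
  isA := G.isA
  step := fun c c' => G.step c c' ∧ c ∈ D ∧ c' ∈ D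
  final := fun c => G.final c ∧ c ∈ D

/-- The winning condition on plays for the player encoded by `b` (`true` = player A,
who wins a play iff it avoids the final configurations; `false` = player B). -/
def winPlayOf {C : Type*} (G : SGame C) (b : Bool) : (ℕ → C) → Prop :=
  fun ρ => if b then ¬ G.BWins ρ else G.BWins ρ

end TSOGames
namespace TSOGames

/-- TSO instructions: read, write, skip, and memory fence. -/
inductive Instr (X V : Type*) : Type _
  | read (x : X) (v : V)
  | write (x : X) (v : V)
  | skip
  | fence

/-- Whether an instruction is a read instruction. -/
def Instr.isRead {X V : Type*} : Instr X V → Bool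
  | .read _ _ => true
  | _ => false

/-- A concurrent program: a family of processes indexed by `I`, each a transition
system over local states `S` labeled by instructions over variables `X` and values `V`. -/
structure Program (I S X V : Type*) where
  delta : I → S → Instr X V → S → Prop

/-- A TSO configuration: local states, per-process FIFO store buffers
(newest message at the head, oldest at the end), and the shared memory. -/
structure Conf (I S X V : Type*) where
  st : I → S
  buf : I → List (X × V)
  mem : X → V

section TSO

variable {I S X V : Type*}

/-- The value of the most recent buffered write on `x`, if any
(the buffer stores the newest message first). -/
def bufVal [DecidableEq X] : List (X × V) → X → Option V
  | [], _ => none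
  | (y, v) :: rest, x => if y = x then some v else bufVal rest x

/-- The value process `ι` reads from variable `x`: the most recent buffered write of
`ι` on `x` if there is one, and the memory value otherwise. -/
def readVal [DecidableEq X] (c : Conf I S X V) (ι : I) (x : X) : V :=
  (bufVal (c.buf ι) x).getD (c.mem x)

variable [DecidableEq I] [DecidableEq X]

/-- Execution of one instruction by process `ι` under TSO semantics. -/
inductive InstrStep (P : Program I S X V) (ι : I) (instr : Instr X V) :
    Conf I S X V → Conf I S X V → Prop
  | read (c : Conf I S X V) (x : X) (v : V) (s' : S) :
      instr = Instr.read x v → P.delta ι (c.st ι) (Instr.read x v) s' →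
      readVal c ι x = v →
      InstrStep P ι instr c ⟨Function.update c.st ι s', c.buf, c.mem⟩
  | write (c : Conf I S X V) (x : X) (v : V) (s' : S) :
      instr = Instr.write x v → P.delta ι (c.st ι) (Instr.write x v) s' →
      InstrStep P ι instr c
        ⟨Function.update c.st ι s', Function.update c.buf ι ((x, v) :: c.buf ι), c.mem⟩
  | skip (c : Conf I S X V) (s' : S) :
      instr = Instr.skip → P.delta ι (c.st ι) Instr.skip s' →
      InstrStep P ι instr c ⟨Function.update c.st ι s', c.buf, c.mem⟩
  | fence (c : Conf I S X V) (s' : S) :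
      instr = Instr.fence → P.delta ι (c.st ι) Instr.fence s' → c.buf ι = [] →
      InstrStep P ι instr c ⟨Function.update c.st ι s', c.buf, c.mem⟩

/-- An update step: the oldest buffered message of some process is committed to memory. -/
inductive UpdStep : Conf I S X V → Conf I S X V → Prop
  | mk (c : Conf I S X V) (ι : I) (x : X) (v : V) (w : List (X × V)) :
      c.buf ι = w ++ [(x, v)] →
      UpdStep c ⟨c.st, Function.update c.buf ι w, Function.update c.mem x v⟩

/-- Finitely many update steps. -/
def Upds : Conf I S X V → Conf I S X V → Prop := Relation.ReflTransGen UpdStep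

/-- `flush` maps every configuration `c` to the configuration `c̄` obtained by
updating all buffered messages to the memory: `c →up* c̄` and all buffers of `c̄` are empty. -/
def IsFlush (flush : Conf I S X V → Conf I S X V) : Prop :=
  ∀ c, Upds c (flush c) ∧ ∀ ι, (flush c).buf ι = []

/-- Update steps by a player, if she is allowed to perform them (otherwise nothing happens). -/
def OptUpds (allowed : Bool) (c c' : Conf I S X V) : Prop :=
  if allowed then Upds c c' else c' = c

/-- A move of a player whose permissions to update before resp. after her move are
given by `perm`: optional updates before, one instruction, optional updates after. -/
def Move (P : Program I S X V) (perm : Bool × Bool) (c c' : Conf I S X V) : Prop :=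
  ∃ c1 c2, OptUpds perm.1 c c1 ∧ (∃ ι instr, InstrStep P ι instr c1 c2) ∧
    OptUpds perm.2 c2 c'

/-- The TSO game induced by a program `P`, update permissions
`permA`/`permB` = (may update before her move, may update after her move)
for players A and B, and a set `SF` of final local states. Game configurations are
TSO configurations annotated by `true` (player A's) or `false` (player B's). -/
def tsoGame (P : Program I S X V) (permA permB : Bool × Bool) (SF : Set S) :
    SGame (Conf I S X V × Bool) where
  isA := fun c => c.2 = true
  step := fun c c' =>
    (c.2 = true ∧ c'.2 = false ∧ Move P permA c.1 c'.1) ∨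
    (c.2 = false ∧ c'.2 = true ∧ Move P permB c.1 c'.1)
  final := fun c => c.2 = true ∧ ∃ ι, c.1.st ι ∈ SF

/-- The configurations owned by the player encoded by `b` (`true` = player A). -/
def ownOf (b : Bool) : Conf I S X V × Bool → Prop := fun c => c.2 = b

/-- The total number of buffered messages of a configuration. -/
def totalBuf [Fintype I] (c : Conf I S X V) : ℕ := ∑ ι, (c.buf ι).length

end TSO

end TSOGames
namespace TSOGames

variable {I S X V : Type*} [DecidableEq I] [DecidableEq X]

/-- `σbar` is the flushing modification of the positional strategy `σX` of the player
encoded by `xIsA`: at each of her configurations `c` with `σX c = c'`, if some non-read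
instruction transition leads from `c` to `c'`, then `σbar c` is obtained by first
flushing all buffers of `c` and then executing such an instruction (so that
`c' →up* σbar c`); otherwise (the move is only possible via a read) `σbar c = σX c`. -/
def IsFlushMod (P : Program I S X V) (flush : Conf I S X V → Conf I S X V)
    (xIsA : Bool) (σX σbar : Conf I S X V × Bool → Conf I S X V × Bool) : Prop :=
  ∀ c : Conf I S X V × Bool, c.2 = xIsA →
    ((∃ ι instr, Instr.isRead instr = false ∧ InstrStep P ι instr c.1 (σX c).1) →
      (∃ ι instr, Instr.isRead instr = false ∧ InstrStep P ι instr (flush c.1) (σbar c).1) ∧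
        Upds (σX c).1 (σbar c).1 ∧ (σbar c).2 = (σX c).2) ∧
    ((¬ ∃ ι instr, Instr.isRead instr = false ∧ InstrStep P ι instr c.1 (σX c).1) →
      σbar c = σX c)

end TSOGames
namespace TSOGames

section Aux

variable {I S X V : Type*} [DecidableEq I] [DecidableEq X]

lemma updStep_st {c c' : Conf I S X V} (h : UpdStep c c') : c'.st = c.st := by
  cases h; rfl

lemma upds_st {c c' : Conf I S X V} (h : Upds c c') : c'.st = c.st := by
  induction h with
  | refl => rfl
  | tail _ hstep ih => exact (updStep_st hstep).trans ih

omit [DecidableEq X] in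
lemma totalBuf_update [Fintype I] (c : Conf I S X V) (ι : I) (l : List (X × V)) :
    (∑ j, ((Function.update c.buf ι l) j).length) + (c.buf ι).length
      = totalBuf c + l.length := by
  classical
  have hcong : ∀ j ∈ Finset.univ, ((Function.update c.buf ι l) j).length
      = Function.update (fun j => (c.buf j).length) ι l.length j := fun j _ =>
    Function.apply_update (fun _ m => m.length) c.buf ι l j
  rw [Finset.sum_congr rfl hcong, Finset.sum_update_of_mem (Finset.mem_univ ι)]
  have hsplit : totalBuf c
      = (∑ j ∈ Finset.univ \ {ι}, (c.buf j).length) + (c.buf ι).length := by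
    rw [Finset.sdiff_singleton_eq_erase, Finset.sum_erase_add _ _ (Finset.mem_univ ι)]
    rfl
  omega

lemma updStep_totalBuf [Fintype I] {c c' : Conf I S X V} (h : UpdStep c c') :
    totalBuf c' + 1 = totalBuf c := by
  cases h with
  | mk ι x v w hb =>
    have := totalBuf_update c ι w
    have hlen : (c.buf ι).length = w.length + 1 := by rw [hb]; simp
    have hc' : totalBuf ⟨c.st, Function.update c.buf ι w, Function.update c.mem x v⟩
        = ∑ j, ((Function.update c.buf ι w) j).length := rfl
    omega

lemma upds_totalBuf [Fintype I] {c c' : Conf I S X V} (h : Upds c c') :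
    totalBuf c' ≤ totalBuf c := by
  induction h with
  | refl => exact le_refl _
  | tail _ hstep ih =>
    have := updStep_totalBuf hstep
    omega

lemma instrStep_buf_of_read {P : Program I S X V} {ι instr c c'}
    (h : InstrStep P ι instr c c') (hr : Instr.isRead instr = true) :
    c'.buf = c.buf := by
  cases h with
  | read => rfl
  | write x v s' he hd => subst he; simp [Instr.isRead] at hr
  | skip s' he hd => subst he; simp [Instr.isRead] at hr
  | fence s' he hd hb => subst he; simp [Instr.isRead] at hr

lemma instrStep_totalBuf_le [Fintype I] {P : Program I S X V} {ι instr c c'}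
    (h : InstrStep P ι instr c c') : totalBuf c' ≤ totalBuf c + 1 := by
  cases h with
  | read => exact Nat.le_succ _
  | skip => exact Nat.le_succ _
  | fence => exact Nat.le_succ _
  | write x v s' he hd =>
    have := totalBuf_update c ι ((x, v) :: c.buf ι)
    have hc' : totalBuf ⟨Function.update c.st ι s',
        Function.update c.buf ι ((x, v) :: c.buf ι), c.mem⟩
        = ∑ j, ((Function.update c.buf ι ((x, v) :: c.buf ι)) j).length := rfl
    have hlen : ((x, v) :: c.buf ι).length = (c.buf ι).length + 1 := rfl
    omega

lemma tso_step_iff (P : Program I S X V) (p : Bool × Bool) (SF : Set S)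
    (c c' : Conf I S X V × Bool) :
    (tsoGame P p p SF).step c c' ↔ c.2 = !c'.2 ∧ Move P p c.1 c'.1 := by
  obtain ⟨c, b⟩ := c; obtain ⟨c', b'⟩ := c'
  cases b <;> cases b' <;> simp [tsoGame]

lemma upds_move {P : Program I S X V} {c c1 c' : Conf I S X V}
    (h : Upds c c1) (hm : Move P (true, false) c1 c') :
    Move P (true, false) c c' := by
  obtain ⟨a, b, hu, hi, hb⟩ := hm
  simp only [OptUpds, if_pos rfl, if_true] at hu hb ⊢
  exact ⟨a, b, h.trans hu, hi, hb⟩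

end Aux

/-- Group II, restriction to the finite game `G'` on configurations with at most
`max 1 |B(c0)|` buffered messages: the restriction of the flushing modification `σbar`
to the X-configurations of `G'` is a valid strategy of `G'` and is winning for
player X from `c0` in `G'`. -/
theorem statement9 {I S X V : Type} [DecidableEq I] [DecidableEq X] [Fintype I]
    (P : Program I S X V) (SF : Set S) (xIsA : Bool)
    (G : SGame (Conf I S X V × Bool))
    (hG : G = tsoGame P (true, false) (true, false) SF)
    (flush : Conf I S X V → Conf I S X V) (hflush : IsFlush flush)
    (c0 : Conf I S X V × Bool)
    (σX σbar : Conf I S X V × Bool → Conf I S X V × Bool)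
    (hwin : G.WinningStrat (ownOf xIsA) (winPlayOf G xIsA) (fun _ c => σX c) c0)
    (hbar : IsFlushMod P flush xIsA σX σbar)
    (D : Set (Conf I S X V × Bool))
    (hD : D = {c | totalBuf c.1 ≤ max 1 (totalBuf c0.1)})
    (G' : SGame (Conf I S X V × Bool)) (hG' : G' = restrictGame G D) :
    G'.WinningStrat (fun c => c.2 = xIsA ∧ c ∈ D) (winPlayOf G' xIsA)
      (fun _ c => σbar c) c0 := by
  subst hG hD hG'
  obtain ⟨hval, hwin2⟩ := hwin
  set TG := tsoGame P (true, false) (true, false) SF with hTG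
  have hvalX : ∀ c : Conf I S X V × Bool, c.2 = xIsA → TG.step c (σX c) :=
    fun c hc => hval [] c hc
  constructor
  · -- validity of the restricted strategy
    rintro h c ⟨hcx, hcD⟩
    show (restrictGame TG _).step c (σbar c)
    have hstep := hvalX c hcx
    obtain ⟨hflag, hmove⟩ := (tso_step_iff P _ SF c (σX c)).mp hstep
    obtain ⟨h1, h2⟩ := hbar c hcx
    by_cases hnr : ∃ ι instr, Instr.isRead instr = false ∧ InstrStep P ι instr c.1 (σX c).1
    · obtain ⟨⟨ι, instr, hir, hstep'⟩, hupd, hfl⟩ := h1 hnr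
      refine ⟨?_, hcD, ?_⟩
      · refine (tso_step_iff P _ SF c (σbar c)).mpr ⟨by rw [hfl]; exact hflag, ?_⟩
        refine ⟨flush c.1, (σbar c).1, ?_, ⟨ι, instr, hstep'⟩, ?_⟩
        · simp only [OptUpds, if_true]
          exact (hflush c.1).1
        · simp [OptUpds]
      · have h0 : totalBuf (flush c.1) = 0 := by
          simp [totalBuf, (hflush c.1).2]
        have hle := instrStep_totalBuf_le hstep'
        have : totalBuf (σbar c).1 ≤ 1 := by omega
        exact le_trans this (le_max_left 1 _)
    · have heq := h2 hnr
      rw [heq]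
      refine ⟨hstep, hcD, ?_⟩
      obtain ⟨c1, c2, hu, ⟨ι, instr, hi⟩, hc2⟩ := hmove
      simp only [OptUpds, if_true] at hu
      simp only [OptUpds, if_false] at hc2
      have hgoal : totalBuf (σX c).1 ≤ totalBuf c.1 := by
        rcases Relation.ReflTransGen.cases_head hu with heq1 | ⟨u, hu1, hu2⟩
        · subst heq1
          cases hr : Instr.isRead instr with
          | false => exact absurd ⟨ι, instr, hr, hc2 ▸ hi⟩ hnr
          | true =>
            have hbuf := instrStep_buf_of_read hi hr
            have : totalBuf c2 = totalBuf c.1 := by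
              unfold totalBuf; rw [hbuf]
            rw [hc2]; omega
        · have e1 := updStep_totalBuf hu1
          have e2 := upds_totalBuf hu2
          have e3 := instrStep_totalBuf_le hi
          rw [hc2]; omega
      exact le_trans hgoal hcD
  · -- winning
    rintro ρ hρ0 hplay hcons
    have hDmem : ∀ i, ρ i ∈ {c | totalBuf c.1 ≤ max 1 (totalBuf c0.1)} :=
      fun i => (hplay i).2.1
    have hGstep : ∀ i, TG.step (ρ i) (ρ (i + 1)) := fun i => (hplay i).1
    -- the shadow play following σX
    set ρ' : ℕ → Conf I S X V × Bool := fun i =>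
      Nat.rec (ρ 0) (fun j _ => if (ρ j).2 = xIsA then σX (ρ j) else ρ (j + 1)) i
      with hρ'
    have hρ's : ∀ j, ρ' (j + 1) = if (ρ j).2 = xIsA then σX (ρ j) else ρ (j + 1) :=
      fun j => rfl
    have hA : ∀ i, (ρ i).2 = xIsA → ρ' i = ρ i := by
      intro i hi
      cases i with
      | zero => rfl
      | succ j =>
        have hfl := ((tso_step_iff P _ SF _ _).mp (hGstep j)).1
        rw [hρ's j, if_neg]
        rw [hfl, hi]
        cases xIsA <;> simp
    have hinv : ∀ i, Upds (ρ' i).1 (ρ i).1 ∧ (ρ' i).2 = (ρ i).2 := by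
      intro i
      cases i with
      | zero => exact ⟨Relation.ReflTransGen.refl, rfl⟩
      | succ j =>
        rw [hρ's j]
        by_cases hj : (ρ j).2 = xIsA
        · rw [if_pos hj]
          have hcj : ρ (j + 1) = σbar (ρ j) := hcons j ⟨hj, hDmem j⟩
          obtain ⟨h1, h2⟩ := hbar (ρ j) hj
          by_cases hnr : ∃ ι instr, Instr.isRead instr = false ∧
              InstrStep P ι instr (ρ j).1 (σX (ρ j)).1
          · obtain ⟨_, hupd, hfl⟩ := h1 hnr
            rw [hcj]
            exact ⟨hupd, hfl.symm⟩
          · rw [hcj, h2 hnr]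
            exact ⟨Relation.ReflTransGen.refl, rfl⟩
        · rw [if_neg hj]
          exact ⟨Relation.ReflTransGen.refl, rfl⟩
    have hplay' : TG.IsPlay ρ' := by
      intro i
      by_cases hi : (ρ i).2 = xIsA
      · rw [hA i hi, hρ's i, if_pos hi]
        exact hvalX (ρ i) hi
      · rw [hρ's i, if_neg hi]
        obtain ⟨hfl, hmv⟩ := (tso_step_iff P _ SF _ _).mp (hGstep i)
        exact (tso_step_iff P _ SF _ _).mpr
          ⟨(hinv i).2.trans hfl, upds_move (hinv i).1 hmv⟩
    have hcons' : SGame.Consistent (ownOf xIsA) (fun _ c => σX c) ρ' := by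
      intro i hi
      have hi' : (ρ i).2 = xIsA := ((hinv i).2).symm.trans hi
      rw [hρ's i, if_pos hi', hA i hi']
    have hW := hwin2 ρ' hρ0 hplay' hcons'
    have hfin : ∀ i, TG.final (ρ' i) ↔ TG.final (ρ i) := by
      intro i
      have hst : (ρ i).1.st = (ρ' i).1.st := upds_st (hinv i).1
      simp only [hTG, tsoGame]
      rw [(hinv i).2, ← hst]
    have hfin' : ∀ i, (restrictGame TG {c | totalBuf c.1 ≤ max 1 (totalBuf c0.1)}).final (ρ i)
        ↔ TG.final (ρ' i) := by
      intro i
      simp only [restrictGame]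
      rw [hfin i]
      exact ⟨fun h => h.1, fun h => ⟨h, hDmem i⟩⟩
    cases xIsA with
    | true =>
      simp only [winPlayOf, if_true, SGame.BWins] at hW ⊢
      intro ⟨i, hfi⟩
      exact hW ⟨i, (hfin' i).mp hfi⟩
    | false =>
      simp only [winPlayOf, if_false, SGame.BWins] at hW ⊢
      obtain ⟨i, hfi⟩ := hW
      exact ⟨i, (hfin' i).mpr hfi⟩

end TSOGames
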